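/- arXiv:2512.07377 — 4 statements merged into one kernel-verified Lean document; each statement's English description precedes it below -/
import Mathlib

section
/- Safeguarded iteration converges linearly: suppose γ ≤ γ' < 1 and a sequence (v_k) in ℝ^S satisfies, for every k, either ‖v_{k+1} − T(v_{k+1})‖_∞ ≤ (γ')^{k+1} ‖v_0 − T(v_0)‖_∞ or v_{k+1} = T(v_k). Then for all k ≥ 0, ‖v_k − T(v_k)‖_∞ ≤ (γ')^k ‖v_0 − T(v_0)‖_∞, and consequently ‖v_k − v⋆‖_∞ ≤ (γ')^k ‖v_0 − T(v_0)‖_∞ / (1−γ), where v⋆ is the unique fixed point of T. -/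
/-- Safeguarded iteration converges linearly. -/
theorem safeguarded_iteration_converges
    {S : Type*} [Fintype S] [Nonempty S]
    (T : (S → ℝ) → (S → ℝ)) (γ γ' : ℝ) (hγ0 : 0 ≤ γ) (hγ1 : γ < 1)
    (hγ'γ : γ ≤ γ') (hγ'1 : γ' < 1)
    (hT : ∀ v w : S → ℝ, ‖T v - T w‖ ≤ γ * ‖v - w‖)
    (vstar : S → ℝ) (hfix : T vstar = vstar)
    (v : ℕ → (S → ℝ))
    (hstep : ∀ k : ℕ,
      ‖v (k + 1) - T (v (k + 1))‖ ≤ γ' ^ (k + 1) * ‖v 0 - T (v 0)‖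
      ∨ v (k + 1) = T (v k)) :
    ∀ k : ℕ,
      ‖v k - T (v k)‖ ≤ γ' ^ k * ‖v 0 - T (v 0)‖ ∧
      ‖v k - vstar‖ ≤ γ' ^ k * ‖v 0 - T (v 0)‖ / (1 - γ) := by
  have hγ'0 : 0 ≤ γ' := le_trans hγ0 hγ'γ
  have hres : ∀ k : ℕ, ‖v k - T (v k)‖ ≤ γ' ^ k * ‖v 0 - T (v 0)‖ := by
    intro k
    induction k with
    | zero => simp
    | succ n ih =>
      rcases hstep n with h | h
      · exact h
      · rw [h]
        calc ‖T (v n) - T (T (v n))‖ ≤ γ * ‖v n - T (v n)‖ := hT _ _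
          _ ≤ γ' * (γ' ^ n * ‖v 0 - T (v 0)‖) := by
              apply mul_le_mul hγ'γ ih (norm_nonneg _) hγ'0
          _ = γ' ^ (n + 1) * ‖v 0 - T (v 0)‖ := by ring
  intro k
  refine ⟨hres k, ?_⟩
  have h1 : ‖v k - vstar‖ ≤ ‖v k - T (v k)‖ + γ * ‖v k - vstar‖ := by
    calc ‖v k - vstar‖ = ‖(v k - T (v k)) + (T (v k) - T vstar)‖ := by
          rw [hfix]; ring_nf
      _ ≤ ‖v k - T (v k)‖ + ‖T (v k) - T vstar‖ := norm_add_le _ _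
      _ ≤ ‖v k - T (v k)‖ + γ * ‖v k - vstar‖ := by
          exact add_le_add_right (hT _ _) _
  have h2 : (1 - γ) * ‖v k - vstar‖ ≤ ‖v k - T (v k)‖ := by nlinarith
  have hpos : 0 < 1 - γ := by linarith
  rw [le_div_iff₀ hpos]
  nlinarith [hres k, hγ'0, pow_nonneg hγ'0 k, norm_nonneg (v 0 - T (v 0))]
end

section
/- Residual contraction for perturbed Bellman updates: let T be a γ-contraction in sup norm and let γ' ∈ (γ,1). If v_{k+1} = T(v_k) + w for a perturbation w ∈ ℝ^S satisfying ‖w‖_∞ ≤ ((γ'−γ)/(1+γ)) ‖v_k − T(v_k)‖_∞, then ‖v_{k+1} − T(v_{k+1})‖_∞ ≤ γ' ‖v_k − T(v_k)‖_∞. -/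
/-- Residual contraction for perturbed Bellman updates. -/
theorem perturbed_update_residual_contraction
    {S : Type*} [Fintype S] [Nonempty S]
    (T : (S → ℝ) → (S → ℝ)) (γ γ' : ℝ) (hγ0 : 0 ≤ γ) (hγ1 : γ < 1)
    (hγ'γ : γ < γ') (hγ'1 : γ' < 1)
    (hT : ∀ v w : S → ℝ, ‖T v - T w‖ ≤ γ * ‖v - w‖)
    (vk w : S → ℝ)
    (hw : ‖w‖ ≤ ((γ' - γ) / (1 + γ)) * ‖vk - T vk‖) :
    ‖(T vk + w) - T (T vk + w)‖ ≤ γ' * ‖vk - T vk‖ := by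
  have h1 : ‖(T vk + w) - T (T vk + w)‖ ≤ ‖w‖ + ‖T vk - T (T vk + w)‖ := by
    have : (T vk + w) - T (T vk + w) = w + (T vk - T (T vk + w)) := by abel
    rw [this]; exact norm_add_le _ _
  have h2 : ‖T vk - T (T vk + w)‖ ≤ γ * ‖vk - (T vk + w)‖ := hT _ _
  have h3 : ‖vk - (T vk + w)‖ ≤ ‖vk - T vk‖ + ‖w‖ := by
    have : vk - (T vk + w) = (vk - T vk) - w := by abel
    rw [this]; exact norm_sub_le _ _
  have hpos : (0:ℝ) < 1 + γ := by linarith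
  have hw' : (1 + γ) * ‖w‖ ≤ (γ' - γ) * ‖vk - T vk‖ := by
    rw [div_mul_eq_mul_div] at hw
    calc (1 + γ) * ‖w‖ ≤ (1 + γ) * ((γ' - γ) * ‖vk - T vk‖ / (1 + γ)) :=
          by apply mul_le_mul_of_nonneg_left hw (le_of_lt hpos)
      _ = (γ' - γ) * ‖vk - T vk‖ := by field_simp
  nlinarith [norm_nonneg w, norm_nonneg (vk - T vk)]
end

section
/- The mellow-max (log-sum-exp average) operator is non-expansive: for ω > 0 and finite A, the map mm_ω : ℝ^A → ℝ defined by mm_ω(q) = −(1/ω) log( (1/|A|) ∑_{a∈A} exp(−ω q(a)) ) satisfies |mm_ω(q) − mm_ω(q')| ≤ max_{a∈A} |q(a) − q'(a)| for all q, q' ∈ ℝ^A. -/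
/-- The mellow-max operator is non-expansive in the sup norm. -/
theorem mellowmax_nonexpansive
    {A : Type*} [Fintype A] [Nonempty A]
    (ω : ℝ) (hω : 0 < ω)
    (mm : (A → ℝ) → ℝ)
    (hmm : ∀ q : A → ℝ, mm q =
      -(1 / ω) * Real.log ((1 / (Fintype.card A : ℝ)) * ∑ a, Real.exp (-ω * q a))) :
    ∀ q q' : A → ℝ,
      |mm q - mm q'| ≤ Finset.univ.sup' Finset.univ_nonempty (fun a => |q a - q' a|) := by
  have hcard : (0:ℝ) < (Fintype.card A : ℝ) := by
    exact_mod_cast Fintype.card_pos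
  intro q q'
  set M := Finset.univ.sup' Finset.univ_nonempty (fun a => |q a - q' a|) with hMdef
  have key : ∀ u v : A → ℝ, (∀ a, u a - v a ≤ M) → mm u - mm v ≤ M := by
    intro u v h
    have hS : (0:ℝ) < ∑ a, Real.exp (-ω * u a) :=
      Finset.sum_pos (fun a _ => Real.exp_pos _) Finset.univ_nonempty
    have hS' : (0:ℝ) < ∑ a, Real.exp (-ω * v a) :=
      Finset.sum_pos (fun a _ => Real.exp_pos _) Finset.univ_nonempty
    have hle : ∑ a, Real.exp (-ω * v a) ≤ Real.exp (ω * M) * ∑ a, Real.exp (-ω * u a) := by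
      rw [Finset.mul_sum]
      apply Finset.sum_le_sum
      intro a _
      rw [← Real.exp_add]
      apply Real.exp_le_exp.2
      have := h a
      nlinarith
    have hlog : Real.log (∑ a, Real.exp (-ω * v a)) ≤
        ω * M + Real.log (∑ a, Real.exp (-ω * u a)) := by
      have := Real.log_le_log hS' hle
      rwa [Real.log_mul (Real.exp_pos _).ne' hS.ne', Real.log_exp] at this
    rw [hmm u, hmm v,
      Real.log_mul (by positivity) hS.ne', Real.log_mul (by positivity) hS'.ne']
    have hω' : (0:ℝ) < 1 / ω := by positivity
    have h3 : (1/ω) * Real.log (∑ a, Real.exp (-ω * v a)) ≤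
        (1/ω) * (ω * M + Real.log (∑ a, Real.exp (-ω * u a))) :=
      mul_le_mul_of_nonneg_left hlog hω'.le
    have h4 : (1/ω) * (ω * M + Real.log (∑ a, Real.exp (-ω * u a)))
        = M + (1/ω) * Real.log (∑ a, Real.exp (-ω * u a)) := by
      field_simp
    nlinarith [h3, h4]
  have h1 : ∀ a, q a - q' a ≤ M := fun a =>
    le_trans (le_abs_self _) (Finset.le_sup' (fun a => |q a - q' a|) (Finset.mem_univ a))
  have h2 : ∀ a, q' a - q a ≤ M := fun a => by
    have : q' a - q a ≤ |q a - q' a| := by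
      rw [abs_sub_comm]; exact le_abs_self _
    exact le_trans this (Finset.le_sup' (fun a => |q a - q' a|) (Finset.mem_univ a))
  rw [abs_le]
  constructor
  · have := key q' q h2
    linarith
  · exact key q q' h1
end

section
/- The mellow-max Bellman operator is a γ-contraction: define, for ω > 0, [T_ω(q)](s,a) = c(s,a) + γ ∑_{s⁺} P(s⁺|s,a) · mm_ω(q(s⁺,·)), where mm_ω(x) = −(1/ω) log((1/|A|) ∑_{a} e^{−ω x(a)}). Then for all q, q' ∈ ℝ^{S×A}, ‖T_ω(q) − T_ω(q')‖_∞ ≤ γ ‖q − q'‖_∞, and hence T_ω has a unique fixed point. -/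
/-- The mellow-max Bellman operator is a γ-contraction in sup norm,
and hence has a unique fixed point. -/
theorem mellowmax_bellman_contraction
    {S A : Type*} [Fintype S] [Fintype A] [Nonempty S] [Nonempty A]
    (P : S → A → S → ℝ) (hP0 : ∀ s a s', 0 ≤ P s a s')
    (hP1 : ∀ s a, ∑ s', P s a s' = 1)
    (c : S → A → ℝ) (γ : ℝ) (hγ0 : 0 ≤ γ) (hγ1 : γ < 1)
    (ω : ℝ) (hω : 0 < ω)
    (mm : (A → ℝ) → ℝ)
    (hmm : ∀ x : A → ℝ, mm x =
      -(1 / ω) * Real.log ((1 / (Fintype.card A : ℝ)) * ∑ a, Real.exp (-ω * x a)))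
    (Tω : (S × A → ℝ) → (S × A → ℝ))
    (hTω : ∀ (q : S × A → ℝ) (s : S) (a : A),
      Tω q (s, a) = c s a + γ * ∑ s', P s a s' * mm (fun a' => q (s', a'))) :
    (∀ q q' : S × A → ℝ, ‖Tω q - Tω q'‖ ≤ γ * ‖q - q'‖) ∧
    (∃! qω : S × A → ℝ, Tω qω = qω) := by
  have hn0 : (0:ℝ) < (Fintype.card A : ℝ) := by
    exact_mod_cast Fintype.card_pos
  -- one-sided Lipschitz bound for mm
  have key : ∀ x y : A → ℝ, ∀ d : ℝ, (∀ a, x a ≤ y a + d) → mm x ≤ mm y + d := by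
    intro x y d hd
    rw [hmm, hmm]
    have hSx : 0 < ∑ a, Real.exp (-ω * x a) :=
      Finset.sum_pos (fun a _ => Real.exp_pos _) Finset.univ_nonempty
    have hSy : 0 < ∑ a, Real.exp (-ω * y a) :=
      Finset.sum_pos (fun a _ => Real.exp_pos _) Finset.univ_nonempty
    have hle : ∑ a, Real.exp (-ω * y a)
        ≤ Real.exp (ω * d) * ∑ a, Real.exp (-ω * x a) := by
      rw [Finset.mul_sum]
      refine Finset.sum_le_sum fun a _ => ?_
      rw [← Real.exp_add]
      apply Real.exp_le_exp.mpr
      nlinarith [hd a, hω.le]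
    have hpos : 0 < (1 / (Fintype.card A : ℝ)) := by positivity
    have h1 : (1 / (Fintype.card A : ℝ)) * ∑ a, Real.exp (-ω * y a)
        ≤ Real.exp (ω * d) * ((1 / (Fintype.card A : ℝ)) * ∑ a, Real.exp (-ω * x a)) := by
      nlinarith
    have hlog : Real.log ((1 / (Fintype.card A : ℝ)) * ∑ a, Real.exp (-ω * y a))
        ≤ ω * d + Real.log ((1 / (Fintype.card A : ℝ)) * ∑ a, Real.exp (-ω * x a)) := by
      calc Real.log ((1 / (Fintype.card A : ℝ)) * ∑ a, Real.exp (-ω * y a))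
          ≤ Real.log (Real.exp (ω * d) *
              ((1 / (Fintype.card A : ℝ)) * ∑ a, Real.exp (-ω * x a))) :=
            Real.log_le_log (by positivity) h1
        _ = ω * d + Real.log ((1 / (Fintype.card A : ℝ)) * ∑ a, Real.exp (-ω * x a)) := by
            rw [Real.log_mul (Real.exp_ne_zero _) (by positivity), Real.log_exp]
    have hω' : (0:ℝ) < 1 / ω := by positivity
    have hmul := mul_le_mul_of_nonneg_left hlog hω'.le
    have hexp : (1 / ω) * (ω * d + Real.log ((1 / (Fintype.card A : ℝ)) * ∑ a, Real.exp (-ω * x a)))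
        = d + (1 / ω) * Real.log ((1 / (Fintype.card A : ℝ)) * ∑ a, Real.exp (-ω * x a)) := by
      field_simp
    rw [hexp] at hmul
    linarith
  -- Lipschitz bound for mm in sup norm
  have mmlip : ∀ x y : A → ℝ, |mm x - mm y| ≤ ‖x - y‖ := by
    intro x y
    have hb : ∀ a, |x a - y a| ≤ ‖x - y‖ := by
      intro a
      have := norm_le_pi_norm (x - y) a
      simpa [Real.norm_eq_abs] using this
    rw [abs_sub_le_iff]
    constructor
    · have := key x y ‖x - y‖ (fun a => by
        have := hb a; rw [abs_le] at this; linarith [this.2])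
      linarith
    · have := key y x ‖x - y‖ (fun a => by
        have := hb a; rw [abs_le] at this; linarith [this.1])
      linarith
  -- the contraction estimate
  have hcon : ∀ q q' : S × A → ℝ, ‖Tω q - Tω q'‖ ≤ γ * ‖q - q'‖ := by
    intro q q'
    rw [pi_norm_le_iff_of_nonneg (by positivity)]
    rintro ⟨s, a⟩
    have hqb : ∀ s' : S, |mm (fun a' => q (s', a')) - mm (fun a' => q' (s', a'))|
        ≤ ‖q - q'‖ := by
      intro s'
      refine le_trans (mmlip _ _) ?_
      rw [pi_norm_le_iff_of_nonneg (norm_nonneg _)]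
      intro a'
      have := norm_le_pi_norm (q - q') (s', a')
      simpa [Real.norm_eq_abs] using this
    have : |Tω q (s, a) - Tω q' (s, a)| ≤ γ * ‖q - q'‖ := by
      rw [hTω, hTω]
      have heq : c s a + γ * ∑ s', P s a s' * mm (fun a' => q (s', a'))
          - (c s a + γ * ∑ s', P s a s' * mm (fun a' => q' (s', a')))
          = γ * ∑ s', P s a s' * (mm (fun a' => q (s', a')) - mm (fun a' => q' (s', a'))) := by
        rw [Finset.mul_sum, Finset.mul_sum, Finset.mul_sum, add_sub_add_left_eq_sub,
          ← Finset.sum_sub_distrib]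
        exact Finset.sum_congr rfl fun s' _ => by ring
      rw [heq, abs_mul, abs_of_nonneg hγ0]
      refine mul_le_mul_of_nonneg_left ?_ hγ0
      calc |∑ s', P s a s' * (mm (fun a' => q (s', a')) - mm (fun a' => q' (s', a')))|
          ≤ ∑ s', |P s a s' * (mm (fun a' => q (s', a')) - mm (fun a' => q' (s', a')))| :=
            Finset.abs_sum_le_sum_abs _ _
        _ ≤ ∑ s', P s a s' * ‖q - q'‖ := by
            refine Finset.sum_le_sum fun s' _ => ?_
            rw [abs_mul, abs_of_nonneg (hP0 s a s')]
            exact mul_le_mul_of_nonneg_left (hqb s') (hP0 s a s')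
        _ = ‖q - q'‖ := by rw [← Finset.sum_mul, hP1, one_mul]
    simpa [Real.norm_eq_abs] using this
  refine ⟨hcon, ?_⟩
  -- unique fixed point via Banach
  have hC : ContractingWith ⟨γ, hγ0⟩ Tω := by
    constructor
    · exact_mod_cast hγ1
    · refine LipschitzWith.of_dist_le_mul fun q q' => ?_
      rw [dist_eq_norm, dist_eq_norm]; exact hcon q q'
  refine ⟨hC.fixedPoint Tω, hC.fixedPoint_isFixedPt, ?_⟩
  intro q hq
  have hfp : Tω (hC.fixedPoint Tω) = hC.fixedPoint Tω := hC.fixedPoint_isFixedPt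
  have h := hcon q (hC.fixedPoint Tω)
  rw [hq, hfp] at h
  have h0 : ‖q - hC.fixedPoint Tω‖ ≤ 0 := by nlinarith [norm_nonneg (q - hC.fixedPoint Tω)]
  have := norm_le_zero_iff.mp h0
  exact sub_eq_zero.mp this
end
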